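/- arXiv:2107.07347 — 6 statements merged into one kernel-verified Lean document; each statement's English description precedes it below -/
import Mathlib

section
/- Let T be a binary tree with leaf set, let b be a positive integer with |Leaves(T)| ≤ b, and let S = { v ∈ Leaves(T) : 2^{w_T(v)} ≤ 2b }. Then there exists a nonempty subset L ⊆ S such that max_{v∈L} 2^{w_T(v)} ≤ (4 + 2·log₂ b) · |L|. -/
/-- A finite binary tree in which every internal node has one or two children. -/
inductive BTree : Type
  | leaf : BTree
  | one : BTree → BTree
  | two : BTree → BTree → BTree

/-- The list of weights `w_T(v)` of the leaves `v` of `T`, where `w_T(v)` is the number of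
ancestors of `v` in `T` that have two children. -/
def BTree.weights : BTree → List ℕ
  | .leaf => [0]
  | .one t => t.weights
  | .two l r => (l.weights ++ r.weights).map (· + 1)

lemma kraft (T : BTree) : ((T.weights).map (fun w => ((1:ℝ)/2)^w)).sum = 1 := by
  induction T with
  | leaf => simp [BTree.weights]
  | one t ih => simpa [BTree.weights] using ih
  | two l r ihl ihr =>
    have hcomp : (fun w => ((1:ℝ)/2)^w) ∘ (· + 1) = fun w => ((1:ℝ)/2)^w * (1/2) := by
      funext w; simp only [Function.comp_apply, pow_succ]
    simp only [BTree.weights, List.map_map, hcomp, List.map_append, List.sum_append,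
      List.sum_map_mul_right, ihl, ihr]
    ring


/-- Fine-grained Kraft averaging: if `T` is a binary tree with at most `b` leaves and
`S = {v ∈ Leaves(T) : 2^{w_T(v)} ≤ 2b}`, then there is a nonempty subset `L ⊆ S` with
`max_{v ∈ L} 2^{w_T(v)} ≤ (4 + 2 log₂ b) ⬝ |L|`. -/
theorem stmt_2 (T : BTree) (b : ℕ) (hb : 0 < b) (hcard : T.weights.length ≤ b) :
    ∃ L : Multiset ℕ,
      L ≤ Multiset.filter (fun w => 2 ^ w ≤ 2 * b) (T.weights : Multiset ℕ) ∧
      L ≠ 0 ∧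
      ∀ w ∈ L, ((2 : ℝ) ^ w) ≤ (4 + 2 * Real.logb 2 (b : ℝ)) * (Multiset.card L : ℝ) := by
  classical
  set f : ℕ → ℝ := fun w => ((1:ℝ)/2)^w with hf
  set M : Multiset ℕ := (T.weights : Multiset ℕ) with hMdef
  set S : Multiset ℕ := Multiset.filter (fun w => 2 ^ w ≤ 2 * b) M with hSdef
  set Sc : Multiset ℕ := Multiset.filter (fun w => ¬ 2 ^ w ≤ 2 * b) M with hScdef
  have hM : (M.map f).sum = 1 := by
    simpa [hMdef, hf] using kraft T
  have hcardM : Multiset.card M ≤ b := by simpa [hMdef] using hcard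
  have hsplit : (S.map f).sum + (Sc.map f).sum = 1 := by
    rw [← Multiset.sum_add, ← Multiset.map_add, hSdef, hScdef,
      Multiset.filter_add_not, hM]
  -- complement bound
  have hScbound : (Sc.map f).sum ≤ (Multiset.card Sc : ℝ) * (1 / (2 * b + 1)) := by
    have := Multiset.sum_le_card_nsmul (Sc.map f) (1 / (2 * (b:ℝ) + 1)) ?_
    · simpa [nsmul_eq_mul] using this
    · intro x hx
      obtain ⟨w, hw, rfl⟩ := Multiset.mem_map.1 hx
      have hw' : ¬ 2 ^ w ≤ 2 * b := (Multiset.mem_filter.1 hw).2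
      have h1 : (2 * b + 1 : ℝ) ≤ 2 ^ w := by
        have : 2 * b + 1 ≤ 2 ^ w := by omega
        exact_mod_cast this
      have h2 : (0:ℝ) < 2 ^ w := by positivity
      show ((1:ℝ)/2)^w ≤ 1 / (2 * (b:ℝ) + 1)
      rw [div_pow, one_pow, div_le_div_iff₀ h2 (by positivity)]
      nlinarith
  have hcardSc : (Multiset.card Sc : ℝ) ≤ b := by
    have : Multiset.card Sc ≤ Multiset.card M := by
      rw [hScdef]; exact Multiset.card_le_card (Multiset.filter_le _ _)
    exact_mod_cast this.trans hcardM
  have hbR : (1:ℝ) ≤ b := by exact_mod_cast hb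
  have hShalf : (1:ℝ)/2 ≤ (S.map f).sum := by
    have h1 : (Sc.map f).sum ≤ (b:ℝ) * (1 / (2 * b + 1)) := by
      refine hScbound.trans ?_
      apply mul_le_mul_of_nonneg_right hcardSc (by positivity)
    have h2b : (0:ℝ) < 2*(b:ℝ)+1 := by positivity
    have h3 : (b:ℝ) * (1/(2*b+1)) ≤ 1/2 := by
      rw [mul_one_div, div_le_div_iff₀ h2b two_pos]; linarith
    linarith
  -- group by value
  set K : ℕ := Nat.log 2 (2 * b) with hK
  have hmemK : ∀ w ∈ S, w ≤ K := by
    intro w hw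
    have hw' : 2 ^ w ≤ 2 * b := (Multiset.mem_filter.1 hw).2
    exact (Nat.le_log_iff_pow_le one_lt_two (by omega)).2 hw'
  have hsum_eq : (S.map f).sum = ∑ k ∈ Finset.range (K + 1), (S.count k) • f k := by
    rw [Finset.sum_multiset_map_count]
    refine Finset.sum_subset ?_ ?_
    · intro x hx
      exact Finset.mem_range.2 (Nat.lt_succ_of_le (hmemK x (Multiset.mem_toFinset.1 hx)))
    · intro x _ hx
      rw [Multiset.count_eq_zero_of_notMem (fun h => hx (Multiset.mem_toFinset.2 h))]
      simp
  -- pigeonhole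
  have hpigeon : ∃ k ∈ Finset.range (K + 1),
      (1:ℝ) / (2 * (K + 1)) ≤ (S.count k) • f k := by
    apply Finset.exists_le_of_sum_le (Finset.nonempty_range_add_one)
    rw [← hsum_eq]
    have : ∑ _k ∈ Finset.range (K + 1), (1:ℝ) / (2 * (K + 1)) = 1/2 := by
      rw [Finset.sum_const, Finset.card_range, nsmul_eq_mul]
      field_simp
      push_cast
      ring
    rw [this]; exact hShalf
  obtain ⟨k, _, hk⟩ := hpigeon
  set n : ℕ := S.count k with hn
  have hkR : (1:ℝ)/(2*(K+1)) ≤ (n:ℝ) * f k := by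
    simpa [nsmul_eq_mul] using hk
  have hfk : (0:ℝ) < f k := by rw [hf]; positivity
  have hnpos : 0 < n := by
    by_contra h
    push_neg at h
    interval_cases n
    simp at hkR
    have hpos : (0:ℝ) < ((K:ℝ)+1)⁻¹ * 2⁻¹ := by positivity
    linarith
  refine ⟨Multiset.replicate n k, ?_, ?_, ?_⟩
  · exact (Multiset.le_count_iff_replicate_le).1 (le_of_eq hn)
  · intro h0
    have hc := congrArg Multiset.card h0
    rw [Multiset.card_replicate] at hc
    simp at hc
    omega
  · intro w hw
    have hwk : w = k := Multiset.eq_of_mem_replicate hw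
    subst hwk
    rw [Multiset.card_replicate]
    -- 2^k ≤ 2(K+1) n
    have h2k : (2:ℝ)^w ≤ 2 * (K + 1) * n := by
      have hpow : f w = ((2:ℝ)^w)⁻¹ := by
        rw [hf]; simp [div_pow, one_div]
      rw [hpow] at hkR
      have h2pos : (0:ℝ) < 2^w := by positivity
      rw [div_le_iff₀ (by positivity)] at hkR
      rw [← sub_nonneg]
      have := mul_le_mul_of_nonneg_right hkR h2pos.le
      field_simp at this ⊢
      nlinarith
    refine h2k.trans ?_
    have hKval : K = Nat.log 2 b + 1 := by
      rw [hK, mul_comm]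
      exact Nat.log_mul_base one_lt_two (by omega)
    have hlog : (Nat.log 2 b : ℝ) ≤ Real.logb 2 b := Real.natLog_le_logb b 2
    have hnR : (1:ℝ) ≤ n := by exact_mod_cast hnpos
    rw [hKval]
    push_cast
    nlinarith [mul_nonneg (sub_nonneg.2 hlog) (le_trans zero_le_one hnR)]
end

section
/- If S ⊆ Leaves(T) satisfies Σ_{u∈S} 2^{-w_T(u)} ≥ 1/2 and |S| ≤ some finite bound, then there exists a nonempty subset L ⊆ S with max_{v∈L} 2^{w_T(v)} ≤ (8 + 4·log₂|S|)·|L|. -/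
/-- If `S ⊆ Leaves(T)` carries Kraft mass at least `1/2`, i.e. `∑_{u ∈ S} 2^{-w_T(u)} ≥ 1/2`,
then there is a nonempty `L ⊆ S` with `max_{v ∈ L} 2^{w_T(v)} ≤ (8 + 4 log₂|S|) ⬝ |L|`. -/
theorem stmt_3 (T : BTree) (S : Multiset ℕ) (hS : S ≤ (T.weights : Multiset ℕ))
    (hsum : (1 : ℝ) / 2 ≤ (S.map fun w => ((2 : ℝ) ^ w)⁻¹).sum) :
    ∃ L : Multiset ℕ, L ≤ S ∧ L ≠ 0 ∧
      ∀ w ∈ L,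
        ((2 : ℝ) ^ w) ≤ (8 + 4 * Real.logb 2 (Multiset.card S : ℝ)) * (Multiset.card L : ℝ) := by
  classical
  set n := Multiset.card S with hn
  have hS0 : S ≠ 0 := by
    rintro rfl; simp at hsum; linarith
  have hn1 : 1 ≤ n := by
    rw [hn, Nat.one_le_iff_ne_zero]
    simpa using hS0
  set C : ℝ := 8 + 4 * Real.logb 2 (n : ℝ) with hCdef
  have hlogb0 : (0:ℝ) ≤ Real.logb 2 (n : ℝ) :=
    Real.logb_nonneg (by norm_num) (by exact_mod_cast hn1)
  have hC8 : (8:ℝ) ≤ C := by rw [hCdef]; linarith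
  have hCpos : (0:ℝ) < C := by linarith
  have key : ∃ w ∈ S, (2:ℝ)^w ≤ C * (S.count w : ℝ) := by
    by_contra hcon
    push_neg at hcon
    -- hcon : ∀ w ∈ S, C * count w < 2^w
    have hsum' : (S.map fun w => ((2 : ℝ) ^ w)⁻¹).sum
        = ∑ w ∈ S.toFinset, (S.count w : ℝ) * ((2:ℝ)^w)⁻¹ := by
      rw [Finset.sum_multiset_map_count]
      simp [nsmul_eq_mul]
    set W : ℕ := Nat.log 2 n + 2 with hW
    set P : ℕ → Prop := fun w => 2^w ≤ 4*n with hP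
    have hsplit := Finset.sum_filter_add_sum_filter_not S.toFinset P
      (fun w => (S.count w : ℝ) * ((2:ℝ)^w)⁻¹)
    -- head card bound
    have hheadcard : (S.toFinset.filter P) ⊆ Finset.Icc 4 W := by
      intro w hw
      simp only [Finset.mem_filter, Multiset.mem_toFinset] at hw
      obtain ⟨hwS, hwP⟩ := hw
      have hcount : (1:ℝ) ≤ (S.count w : ℝ) := by
        exact_mod_cast Multiset.one_le_count_iff_mem.mpr hwS
      have h2w : C < (2:ℝ)^w := lt_of_le_of_lt (by nlinarith) (hcon w hwS)
      have hw4 : 4 ≤ w := by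
        by_contra hlt
        push_neg at hlt
        have : (2:ℝ)^w ≤ 2^3 := by
          apply pow_le_pow_right₀ (by norm_num) (by omega)
        norm_num at this
        linarith
      have hwW : w ≤ W := by
        have : 2^w ≤ n*2*2 := by omega
        have := (Nat.le_log_iff_pow_le (by norm_num) (by positivity)).mpr this
        rw [Nat.log_mul_base (by norm_num) (by omega),
          Nat.log_mul_base (by norm_num) (by omega)] at this
        omega
      exact Finset.mem_Icc.mpr ⟨hw4, hwW⟩
    have hheadcard' : ((S.toFinset.filter P).card : ℝ) ≤ Real.logb 2 (n:ℝ) := by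
      have h1 := Finset.card_le_card hheadcard
      rw [Nat.card_Icc] at h1
      have h2 : (S.toFinset.filter P).card ≤ Nat.log 2 n := by omega
      calc ((S.toFinset.filter P).card : ℝ) ≤ (Nat.log 2 n : ℝ) := by exact_mod_cast h2
        _ ≤ Real.logb 2 (n:ℝ) := by exact_mod_cast Real.natLog_le_logb n 2
    -- head sum bound
    have hhead : ∑ w ∈ S.toFinset.filter P, (S.count w : ℝ) * ((2:ℝ)^w)⁻¹
        ≤ Real.logb 2 (n:ℝ) * (1/C) := by
      have h1 : ∀ w ∈ S.toFinset.filter P, (S.count w : ℝ) * ((2:ℝ)^w)⁻¹ ≤ 1/C := by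
        intro w hw
        simp only [Finset.mem_filter, Multiset.mem_toFinset] at hw
        have h := hcon w hw.1
        have hpow : (0:ℝ) < (2:ℝ)^w := by positivity
        rw [mul_inv_le_iff₀ hpow, div_mul_eq_mul_div, le_div_iff₀ hCpos]
        nlinarith
      calc ∑ w ∈ S.toFinset.filter P, (S.count w : ℝ) * ((2:ℝ)^w)⁻¹
          ≤ (S.toFinset.filter P).card • (1/C) := Finset.sum_le_card_nsmul _ _ _ h1
        _ = ((S.toFinset.filter P).card : ℝ) * (1/C) := by simp [nsmul_eq_mul]
        _ ≤ Real.logb 2 (n:ℝ) * (1/C) := by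
            apply mul_le_mul_of_nonneg_right hheadcard'
            positivity
    -- tail sum bound
    have htail : ∑ w ∈ S.toFinset.filter (fun w => ¬ P w), (S.count w : ℝ) * ((2:ℝ)^w)⁻¹
        ≤ 1/4 := by
      have hnpos : (0:ℝ) < (n:ℝ) := by exact_mod_cast hn1
      have h1 : ∀ w ∈ S.toFinset.filter (fun w => ¬ P w),
          (S.count w : ℝ) * ((2:ℝ)^w)⁻¹ ≤ (S.count w : ℝ) * (1/(4*n)) := by
        intro w hw
        simp only [Finset.mem_filter, Multiset.mem_toFinset, hP, not_le] at hw
        have h2 : (4*(n:ℝ)) < (2:ℝ)^w := by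
          have := hw.2
          calc (4*(n:ℝ)) = ((4*n : ℕ) : ℝ) := by push_cast; ring
            _ < ((2^w : ℕ) : ℝ) := by exact_mod_cast this
            _ = (2:ℝ)^w := by push_cast; ring
        apply mul_le_mul_of_nonneg_left _ (by positivity)
        rw [one_div]
        apply inv_anti₀ (by positivity) (le_of_lt h2)
      calc ∑ w ∈ S.toFinset.filter (fun w => ¬ P w), (S.count w : ℝ) * ((2:ℝ)^w)⁻¹
          ≤ ∑ w ∈ S.toFinset.filter (fun w => ¬ P w), (S.count w : ℝ) * (1/(4*n)) :=
            Finset.sum_le_sum h1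
        _ = (∑ w ∈ S.toFinset.filter (fun w => ¬ P w), (S.count w : ℝ)) * (1/(4*n)) := by
            rw [Finset.sum_mul]
        _ ≤ (n:ℝ) * (1/(4*n)) := by
            apply mul_le_mul_of_nonneg_right _ (by positivity)
            have hsub : ∑ w ∈ S.toFinset.filter (fun w => ¬ P w), (S.count w : ℝ)
                ≤ ∑ w ∈ S.toFinset, (S.count w : ℝ) :=
              Finset.sum_le_sum_of_subset_of_nonneg (Finset.filter_subset _ _)
                (fun i _ _ => by positivity)
            have htot : ∑ w ∈ S.toFinset, (S.count w : ℝ) = (n:ℝ) := by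
              rw [hn]
              exact_mod_cast Multiset.toFinset_sum_count_eq S
            linarith
        _ = 1/4 := by field_simp
    -- combine
    rw [hsum', ← hsplit] at hsum
    have hfinal : (1:ℝ)/2 ≤ Real.logb 2 (n:ℝ) * (1/C) + 1/4 := by linarith
    have : C ≤ 4 * Real.logb 2 (n:ℝ) := by
      have h4 : 1/4 ≤ Real.logb 2 (n:ℝ) * (1/C) := by linarith
      rw [mul_one_div, le_div_iff₀ hCpos] at h4
      linarith
    rw [hCdef] at this
    linarith
  obtain ⟨w₀, hw₀S, hw₀⟩ := key
  refine ⟨Multiset.replicate (S.count w₀) w₀, Multiset.le_count_iff_replicate_le.mp le_rfl, ?_, ?_⟩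
  · have h1 : 1 ≤ S.count w₀ := Multiset.one_le_count_iff_mem.mpr hw₀S
    intro h
    have h2 := congrArg Multiset.card h
    rw [Multiset.card_replicate] at h2
    simp at h2
    exact h2 hw₀S
  · intro w hw
    rw [Multiset.eq_of_mem_replicate hw]
    simpa using hw₀
end

section
/- For n a power of two, a subtree T of the full binary tree T^full_n, and a leaf v of T with frequency label f, the one-dimensional adaptive aliasing filter defined in the Fourier domain by Ĝ_v(ξ) = 2^{-w_T(v)} · Π_{ℓ ∈ Anc(v,T)} (1 + e^{2πi(ξ-f)/2^{ℓ+1}}) satisfies Σ_{ξ ∈ [n]} |Ĝ_v(ξ)|² = n / 2^{w_T(v)}. -/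
open scoped Classical

noncomputable section

/-- `T` is a subtree of the full FFT binary tree `T^full_n` of depth `m` on the universe
`[n] = [2^m]`: nodes are pairs `(j, f)` of a level `j ≤ m` and a label `f ∈ [2^j]`;
`T` contains the root `(0, 0)` and is closed under taking parents (the parent of
`(j+1, f)` is `(j, f % 2^j)`; the right child of `(j, g)` is `(j+1, g)` and the left
child is `(j+1, g + 2^j)`). -/
def IsSubtree (m : ℕ) (T : Set (ℕ × ℕ)) : Prop :=
  (0, 0) ∈ T ∧ (∀ j f : ℕ, (j + 1, f) ∈ T → (j, f % 2 ^ j) ∈ T) ∧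
    ∀ j f : ℕ, (j, f) ∈ T → j ≤ m ∧ f < 2 ^ j

/-- `(j, f)` is a leaf of `T`: it belongs to `T` and none of its two children does. -/
def IsLeaf (T : Set (ℕ × ℕ)) (j f : ℕ) : Prop :=
  (j, f) ∈ T ∧ (j + 1, f) ∉ T ∧ (j + 1, f + 2 ^ j) ∉ T

/-- `Anc T j f`: the set of levels `ℓ < j` at which the ancestor `(ℓ, f % 2^ℓ)` of the
node `(j, f)` has two children in `T`.  Its cardinality is the weight `w_T(v)`. -/
def Anc (T : Set (ℕ × ℕ)) (j f : ℕ) : Finset ℕ :=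
  (Finset.range j).filter fun ℓ =>
    (ℓ + 1, f % 2 ^ ℓ) ∈ T ∧ (ℓ + 1, f % 2 ^ ℓ + 2 ^ ℓ) ∈ T

/-- The one-dimensional adaptive aliasing `(v, T)`-isolating filter in the Fourier domain:
`Ĝ_v(ξ) = 2^{-w_T(v)} ⬝ ∏_{ℓ ∈ Anc(v,T)} (1 + e^{2πi(ξ - f)/2^{ℓ+1}})`. -/
def filt (T : Set (ℕ × ℕ)) (j f ξ : ℕ) : ℂ :=
  (2 : ℂ) ^ (-((Anc T j f).card : ℤ)) *
    ∏ ℓ ∈ Anc T j f,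
      (1 + Complex.exp (2 * (Real.pi : ℂ) * Complex.I * ((ξ : ℂ) - (f : ℂ)) / 2 ^ (ℓ + 1)))

lemma twoPiI_ne : (2:ℂ) * Real.pi * Complex.I ≠ 0 := by
  simp [Real.pi_ne_zero, Complex.I_ne_zero]

lemma orth (m : ℕ) (d : ℤ) (hd : ¬ ((2:ℤ)^m ∣ d)) :
    ∑ ξ ∈ Finset.range (2^m),
      Complex.exp (2 * (Real.pi:ℂ) * Complex.I * d / 2^m) ^ ξ = 0 := by
  have h2m : ((2:ℂ)^m) ≠ 0 := pow_ne_zero _ two_ne_zero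
  set x := Complex.exp (2 * (Real.pi:ℂ) * Complex.I * d / 2^m) with hx
  have hx1 : x ≠ 1 := by
    intro h
    rw [hx, Complex.exp_eq_one_iff] at h
    obtain ⟨k, hk⟩ := h
    refine hd ⟨k, ?_⟩
    have hc : (d : ℂ) = 2^m * k := by
      rw [div_eq_iff h2m] at hk
      apply mul_left_cancel₀ twoPiI_ne
      linear_combination hk
    exact_mod_cast hc
  have hxn : x ^ (2^m) = 1 := by
    rw [hx, ← Complex.exp_nat_mul]
    rw [show ((2^m : ℕ) : ℂ) * (2 * (Real.pi:ℂ) * Complex.I * d / 2^m)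
        = d * (2 * Real.pi * Complex.I) by push_cast; field_simp]
    exact Complex.exp_int_mul_two_pi_mul_I d
  rw [geom_sum_eq hx1, hxn]
  simp

lemma sum_two_pow (m : ℕ) : ∑ i ∈ Finset.range m, 2^i = 2^m - 1 := by
  induction m with
  | zero => simp
  | succ n ih =>
      have := Nat.one_le_two_pow (n := n)
      rw [Finset.sum_range_succ, ih, pow_succ]
      omega

lemma hprod (A : Finset ℕ) (v : ℕ → ℂ) :
    ∏ ℓ ∈ A, (1 + v ℓ) = ∑ S ∈ A.powerset, ∏ ℓ ∈ S, v ℓ := by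
  rw [Finset.prod_add]
  simp only [Finset.prod_const_one, one_mul]
  refine Finset.sum_nbij' (fun S => A \ S) (fun S => A \ S) ?_ ?_ ?_ ?_ ?_ <;>
    simp +contextual [Finset.mem_powerset, 
      Finset.inf_eq_inter, Finset.inter_eq_right, Finset.sdiff_subset]

open Finset in
/-- Energy of an adaptive aliasing filter: for `n = 2^m` a power of two, a subtree `T` of
`T^full_n` and a leaf `v = (j, f)` of `T`,
`∑_{ξ ∈ [n]} |Ĝ_v(ξ)|² = n / 2^{w_T(v)}`. -/
theorem stmt_5 (m : ℕ) (T : Set (ℕ × ℕ)) (hT : IsSubtree m T) (j f : ℕ)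
    (hleaf : IsLeaf T j f) :
    ∑ ξ ∈ Finset.range (2 ^ m), ‖filt T j f ξ‖ ^ 2
      = (2 ^ m : ℝ) / 2 ^ (Anc T j f).card := by
  have hjm : j ≤ m := (hT.2.2 j f hleaf.1).1
  set A := Anc T j f with hA
  have hAm : ∀ ℓ ∈ A, ℓ < m := by
    intro ℓ hℓ
    have := Finset.mem_range.1 (Finset.mem_filter.1 hℓ).1
    omega
  set w := A.card with hw
  set t : Finset ℕ → ℕ := fun S => ∑ ℓ ∈ S, 2 ^ (m - 1 - ℓ) with ht
  set E : ℕ → ℂ :=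
    fun ξ => Complex.exp (2 * (Real.pi:ℂ) * Complex.I * ((ξ:ℂ) - (f:ℂ)) / 2^m) with hE
  have h2m : ((2:ℂ)^m) ≠ 0 := pow_ne_zero _ two_ne_zero
  -- bound on t
  have htlt : ∀ S ∈ A.powerset, t S < 2^m := by
    intro S hS
    rw [Finset.mem_powerset] at hS
    have himg : t S = ∑ i ∈ S.image (fun ℓ => m - 1 - ℓ), 2^i := by
      rw [Finset.sum_image]
      intro a ha b hb hab
      have ha' := hAm a (hS ha); have hb' := hAm b (hS hb); simp only at hab; omega
    have hsub : S.image (fun ℓ => m - 1 - ℓ) ⊆ Finset.range m := by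
      intro i hi
      obtain ⟨ℓ, hℓ, rfl⟩ := Finset.mem_image.1 hi
      have := hAm ℓ (hS hℓ)
      exact Finset.mem_range.2 (by omega)
    have hle : t S ≤ ∑ i ∈ Finset.range m, 2^i :=
      himg ▸ Finset.sum_le_sum_of_subset hsub
    rw [sum_two_pow] at hle
    have := Nat.one_le_two_pow (n := m)
    omega
  -- injectivity of t on the powerset of A
  have htinj : ∀ S ∈ A.powerset, ∀ S' ∈ A.powerset, t S = t S' → S = S' := by
    intro S hS S' hS' h
    rw [Finset.mem_powerset] at hS hS'
    have him : ∀ S₀ : Finset ℕ, S₀ ⊆ A →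
        t S₀ = ∑ i ∈ S₀.image (fun ℓ => m - 1 - ℓ), 2^i := by
      intro S₀ hS₀
      rw [Finset.sum_image]
      intro a ha b hb hab
      have ha' := hAm a (hS₀ ha); have hb' := hAm b (hS₀ hb); simp only at hab; omega
    rw [him S hS, him S' hS'] at h
    have himeq : S.image (fun ℓ => m - 1 - ℓ) = S'.image (fun ℓ => m - 1 - ℓ) :=
      Finset.geomSum_injective (le_refl 2) h
    ext x
    constructor <;> intro hx
    · have : (m - 1 - x) ∈ S'.image (fun ℓ => m - 1 - ℓ) := by
        rw [← himeq]; exact Finset.mem_image_of_mem _ hx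
      obtain ⟨y, hy, hxy⟩ := Finset.mem_image.1 this
      have hx' := hAm x (hS hx); have hy' := hAm y (hS' hy)
      have : y = x := by omega
      exact this ▸ hy
    · have : (m - 1 - x) ∈ S.image (fun ℓ => m - 1 - ℓ) := by
        rw [himeq]; exact Finset.mem_image_of_mem _ hx
      obtain ⟨y, hy, hxy⟩ := Finset.mem_image.1 this
      have hx' := hAm x (hS' hx); have hy' := hAm y (hS hy)
      have : y = x := by omega
      exact this ▸ hy
  -- expansion of the filter
  have hfilt : ∀ ξ : ℕ,
      filt T j f ξ = (2:ℂ)^(-(w:ℤ)) * ∑ S ∈ A.powerset, E ξ ^ t S := by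
    intro ξ
    unfold filt
    rw [← hA, ← hw]
    congr 1
    have hcong : ∀ ℓ ∈ A,
        (1 + Complex.exp (2 * (Real.pi:ℂ) * Complex.I * ((ξ:ℂ) - (f:ℂ)) / 2 ^ (ℓ+1)))
          = 1 + E ξ ^ (2 ^ (m - 1 - ℓ)) := by
      intro ℓ hℓ
      have hℓm := hAm ℓ hℓ
      congr 1
      rw [hE]
      rw [← Complex.exp_nat_mul]
      congr 1
      have hpow : (2:ℂ)^(m-1-ℓ) * 2^(ℓ+1) = 2^m := by
        rw [← pow_add]; congr 1; omega
      have h2l : ((2:ℂ)^(ℓ+1)) ≠ 0 := pow_ne_zero _ two_ne_zero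
      push_cast
      rw [← hpow]
      field_simp
    rw [Finset.prod_congr rfl hcong, hprod A (fun ℓ => E ξ ^ (2 ^ (m - 1 - ℓ)))]
    refine Finset.sum_congr rfl fun S hS => ?_
    rw [Finset.prod_pow_eq_pow_sum]
  -- orthogonality
  have hK2 : ∀ a b : ℕ, a < 2^m → b < 2^m →
      ∑ ξ ∈ Finset.range (2^m), E ξ ^ a * (starRingEnd ℂ) (E ξ ^ b)
        = if a = b then (2^m : ℂ) else 0 := by
    intro a b ha hb
    have hconjE : ∀ ξ : ℕ, (starRingEnd ℂ) (E ξ)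
        = Complex.exp (-(2 * (Real.pi:ℂ) * Complex.I * ((ξ:ℂ) - (f:ℂ)) / 2^m)) := by
      intro ξ
      rw [hE, ← Complex.exp_conj]
      congr 1
      simp [map_div₀, Complex.conj_I, map_ofNat]
      ring
    have hterm : ∀ ξ : ℕ, E ξ ^ a * (starRingEnd ℂ) (E ξ ^ b)
        = Complex.exp (((a:ℂ) - (b:ℂ)) *
            (2 * (Real.pi:ℂ) * Complex.I * ((ξ:ℂ) - (f:ℂ)) / 2^m)) := by
      intro ξ
      rw [map_pow, hconjE, hE, ← Complex.exp_nat_mul, ← Complex.exp_nat_mul,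
        ← Complex.exp_add]
      congr 1
      ring
    by_cases hab : a = b
    · subst hab
      rw [if_pos rfl]
      have : ∀ ξ ∈ Finset.range (2^m), E ξ ^ a * (starRingEnd ℂ) (E ξ ^ a) = 1 := by
        intro ξ _
        rw [hterm ξ, sub_self, zero_mul, Complex.exp_zero]
      rw [Finset.sum_congr rfl this, Finset.sum_const, Finset.card_range]
      simp
    · rw [if_neg hab]
      set d : ℤ := (a:ℤ) - (b:ℤ) with hd
      have hd0 : d ≠ 0 := sub_ne_zero.2 (by exact_mod_cast hab)
      have h1 : d < 2^m := by
        have h1a : (a:ℤ) < 2^m := by exact_mod_cast ha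
        have h1b : (0:ℤ) ≤ b := Int.ofNat_nonneg b
        rw [hd]; linarith
      have h2 : -(2^m : ℤ) < d := by
        have h1b : (b:ℤ) < 2^m := by exact_mod_cast hb
        have h1a : (0:ℤ) ≤ a := Int.ofNat_nonneg a
        rw [hd]; linarith
      have hnd : ¬ ((2:ℤ)^m ∣ d) := by
        intro hdvd
        have hle := Int.le_of_dvd (abs_pos.2 hd0) ((dvd_abs _ _).2 hdvd)
        have hlt : |d| < 2^m := abs_lt.2 ⟨h2, h1⟩
        linarith
      have hsplit : ∀ ξ : ℕ,
          Complex.exp (((a:ℂ) - (b:ℂ)) *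
              (2 * (Real.pi:ℂ) * Complex.I * ((ξ:ℂ) - (f:ℂ)) / 2^m))
            = Complex.exp (2 * (Real.pi:ℂ) * Complex.I * (d:ℂ) / 2^m) ^ ξ *
                Complex.exp (-(2 * (Real.pi:ℂ) * Complex.I * (d:ℂ) * (f:ℂ) / 2^m)) := by
        intro ξ
        rw [← Complex.exp_nat_mul, ← Complex.exp_add]
        congr 1
        rw [hd]
        push_cast
        field_simp
        ring
      calc ∑ ξ ∈ Finset.range (2^m), E ξ ^ a * (starRingEnd ℂ) (E ξ ^ b)
          = ∑ ξ ∈ Finset.range (2^m),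
              Complex.exp (2 * (Real.pi:ℂ) * Complex.I * (d:ℂ) / 2^m) ^ ξ *
                Complex.exp (-(2 * (Real.pi:ℂ) * Complex.I * (d:ℂ) * (f:ℂ) / 2^m)) :=
            Finset.sum_congr rfl fun ξ _ => by rw [hterm ξ, hsplit ξ]
        _ = (∑ ξ ∈ Finset.range (2^m),
              Complex.exp (2 * (Real.pi:ℂ) * Complex.I * (d:ℂ) / 2^m) ^ ξ) *
                Complex.exp (-(2 * (Real.pi:ℂ) * Complex.I * (d:ℂ) * (f:ℂ) / 2^m)) :=
            (Finset.sum_mul _ _ _).symm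
        _ = 0 := by rw [orth m d hnd, zero_mul]
  -- the complex-valued sum
  have key : ∑ ξ ∈ Finset.range (2^m),
      filt T j f ξ * (starRingEnd ℂ) (filt T j f ξ) = (2^m : ℂ) / 2^w := by
    have hconjfilt : ∀ ξ, (starRingEnd ℂ) (filt T j f ξ)
        = (2:ℂ)^(-(w:ℤ)) * ∑ S ∈ A.powerset, (starRingEnd ℂ) (E ξ ^ t S) := by
      intro ξ
      rw [hfilt ξ, map_mul, map_sum]
      congr 1
      simp [map_zpow₀, map_ofNat]
    calc ∑ ξ ∈ Finset.range (2^m), filt T j f ξ * (starRingEnd ℂ) (filt T j f ξ)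
        = ∑ ξ ∈ Finset.range (2^m), ((2:ℂ)^(-(w:ℤ)) * (2:ℂ)^(-(w:ℤ))) *
            ∑ S ∈ A.powerset, ∑ S' ∈ A.powerset,
              E ξ ^ t S * (starRingEnd ℂ) (E ξ ^ t S') := by
          refine Finset.sum_congr rfl fun ξ _ => ?_
          rw [hconjfilt ξ, hfilt ξ]
          rw [mul_mul_mul_comm, Finset.sum_mul_sum]
      _ = ((2:ℂ)^(-(w:ℤ)) * (2:ℂ)^(-(w:ℤ))) *
            ∑ S ∈ A.powerset, ∑ S' ∈ A.powerset,
              ∑ ξ ∈ Finset.range (2^m), E ξ ^ t S * (starRingEnd ℂ) (E ξ ^ t S') := by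
          rw [← Finset.mul_sum]
          congr 1
          rw [Finset.sum_comm]
          exact Finset.sum_congr rfl fun S _ => Finset.sum_comm
      _ = ((2:ℂ)^(-(w:ℤ)) * (2:ℂ)^(-(w:ℤ))) * ∑ S ∈ A.powerset, (2^m : ℂ) := by
          congr 1
          refine Finset.sum_congr rfl fun S hS => ?_
          calc ∑ S' ∈ A.powerset,
                ∑ ξ ∈ Finset.range (2^m), E ξ ^ t S * (starRingEnd ℂ) (E ξ ^ t S')
              = ∑ S' ∈ A.powerset, if t S = t S' then (2^m:ℂ) else 0 :=
                Finset.sum_congr rfl fun S' hS' => hK2 _ _ (htlt S hS) (htlt S' hS')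
            _ = ∑ S' ∈ A.powerset, if S' = S then (2^m:ℂ) else 0 := by
                refine Finset.sum_congr rfl fun S' hS' => ?_
                by_cases h : S' = S
                · subst h; simp
                · rw [if_neg h, if_neg]
                  intro hts
                  exact h (htinj S' hS' S hS hts.symm)
            _ = (2^m:ℂ) := by
                rw [Finset.sum_ite_eq' A.powerset S (fun _ => (2^m:ℂ))]
                simp [hS]
      _ = (2^m : ℂ) / 2^w := by
          rw [Finset.sum_const, Finset.card_powerset, ← hw, nsmul_eq_mul]
          push_cast
          have hzw : (2:ℂ)^(-(w:ℤ)) = ((2:ℂ)^w)⁻¹ := by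
            rw [zpow_neg, zpow_natCast]
          rw [hzw]
          have h2w : ((2:ℂ)^w) ≠ 0 := pow_ne_zero _ two_ne_zero
          field_simp
  -- conclude
  have habs : ∀ z : ℂ, ((‖z‖ ^ 2 : ℝ) : ℂ) = z * (starRingEnd ℂ) z := by
    intro z
    rw [Complex.sq_norm]
    exact (Complex.mul_conj z).symm
  apply Complex.ofReal_injective
  rw [Complex.ofReal_sum]
  calc ∑ ξ ∈ Finset.range (2^m), ((‖filt T j f ξ‖ ^ 2 : ℝ) : ℂ)
      = ∑ ξ ∈ Finset.range (2^m), filt T j f ξ * (starRingEnd ℂ) (filt T j f ξ) :=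
        Finset.sum_congr rfl fun ξ _ => habs _
    _ = (2^m : ℂ) / 2^w := key
    _ = (((2^m : ℝ) / 2^w : ℝ) : ℂ) := by push_cast; ring
end
end

section
/- Unit partition of energy in one dimension: for n a power of two and any subtree T of T^full_n, with Ĝ_v the (v,T)-isolating filter Ĝ_v(ξ) = 2^{-w_T(v)} Π_{ℓ∈Anc(v,T)}(1 + e^{2πi(ξ−f_v)/2^{ℓ+1}}), for every ξ ∈ [n] one has Σ_{v ∈ Leaves(T)} |Ĝ_v(ξ)|² = 1. -/
open scoped Classical

noncomputable section

lemma ancestor_mem {m : ℕ} {T : Set (ℕ × ℕ)} (hT : IsSubtree m T) :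
    ∀ d j f, (j + d, f) ∈ T → (j, f % 2 ^ j) ∈ T := by
  intro d
  induction d with
  | zero =>
    intro j f h
    have hb := (hT.2.2 j f h).2
    rwa [Nat.mod_eq_of_lt hb]
  | succ d ih =>
    intro j f h
    have h' : (j + d + 1, f) ∈ T := by rwa [show j + (d+1) = j + d + 1 by ring] at h
    have hp := hT.2.1 (j + d) f h'
    have := ih j (f % 2 ^ (j + d)) hp
    rwa [Nat.mod_mod_of_dvd _ (pow_dvd_pow 2 (Nat.le_add_right j d))] at this

lemma exp_shift (ξ f j ℓ : ℕ) (h : ℓ < j) :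
    Complex.exp (2 * (Real.pi : ℂ) * Complex.I * ((ξ : ℂ) - ((f + 2 ^ j : ℕ) : ℂ)) / 2 ^ (ℓ + 1)) =
    Complex.exp (2 * (Real.pi : ℂ) * Complex.I * ((ξ : ℂ) - (f : ℂ)) / 2 ^ (ℓ + 1)) := by
  rw [Complex.exp_eq_exp_iff_exists_int]
  refine ⟨-(2 ^ (j - ℓ - 1)), ?_⟩
  have h2 : (2 : ℂ) ^ j = 2 ^ (ℓ + 1) * 2 ^ (j - ℓ - 1) := by
    rw [← pow_add]; congr 1; omega
  have hne : (2 : ℂ) ^ (ℓ + 1) ≠ 0 := pow_ne_zero _ two_ne_zero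
  push_cast
  field_simp
  rw [h2]
  ring

lemma abs_z (ξ f j : ℕ) :
    ‖Complex.exp (2 * (Real.pi : ℂ) * Complex.I * ((ξ : ℂ) - (f : ℂ)) / 2 ^ (j + 1))‖ = 1 := by
  have : 2 * (Real.pi : ℂ) * Complex.I * ((ξ : ℂ) - (f : ℂ)) / 2 ^ (j + 1)
      = ((2 * Real.pi * ((ξ : ℝ) - (f : ℝ)) / 2 ^ (j + 1) : ℝ) : ℂ) * Complex.I := by
    push_cast; ring
  rw [this, Complex.norm_exp_ofReal_mul_I]

lemma neg_z (ξ f j : ℕ) :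
    Complex.exp (2 * (Real.pi : ℂ) * Complex.I * ((ξ : ℂ) - ((f + 2 ^ j : ℕ) : ℂ)) / 2 ^ (j + 1)) =
    -Complex.exp (2 * (Real.pi : ℂ) * Complex.I * ((ξ : ℂ) - (f : ℂ)) / 2 ^ (j + 1)) := by
  have harg : 2 * (Real.pi : ℂ) * Complex.I * ((ξ : ℂ) - ((f + 2 ^ j : ℕ) : ℂ)) / 2 ^ (j + 1)
      = 2 * (Real.pi : ℂ) * Complex.I * ((ξ : ℂ) - (f : ℂ)) / 2 ^ (j + 1) + -(Real.pi:ℂ) * Complex.I := by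
    have hne : (2 : ℂ) ^ (j + 1) ≠ 0 := pow_ne_zero _ two_ne_zero
    have h2 : (2 : ℂ) ^ (j + 1) = 2 * 2 ^ j := by rw [pow_succ]; ring
    push_cast
    field_simp
    rw [h2]; ring
  rw [harg, Complex.exp_add]
  have : Complex.exp (-(Real.pi:ℂ) * Complex.I) = -1 := by
    rw [show -(Real.pi:ℂ) * Complex.I = -((Real.pi : ℂ) * Complex.I) by ring,
      Complex.exp_neg, Complex.exp_pi_mul_I]
    norm_num
  rw [this]; ring

lemma mod_add_pow (f j ℓ : ℕ) (h : ℓ ≤ j) : (f + 2 ^ j) % 2 ^ ℓ = f % 2 ^ ℓ := by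
  conv_lhs => rw [show 2 ^ j = 2 ^ (j - ℓ) * 2 ^ ℓ by rw [← pow_add]; congr 1; omega]
  exact Nat.add_mul_mod_self_right _ _ _

lemma Anc_succ (T : Set (ℕ × ℕ)) (j c : ℕ) : Anc T (j + 1) c =
    if (j + 1, c % 2 ^ j) ∈ T ∧ (j + 1, c % 2 ^ j + 2 ^ j) ∈ T
    then insert j (Anc T j c) else Anc T j c := by
  unfold Anc
  rw [Finset.range_add_one, Finset.filter_insert]

lemma Anc_congr (T : Set (ℕ × ℕ)) {j c f : ℕ} (h : ∀ ℓ < j, c % 2 ^ ℓ = f % 2 ^ ℓ) :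
    Anc T j c = Anc T j f := by
  unfold Anc
  apply Finset.filter_congr
  intro ℓ hℓ
  rw [Finset.mem_range] at hℓ
  rw [h ℓ hℓ]

lemma not_mem_Anc (T : Set (ℕ × ℕ)) (j f : ℕ) : j ∉ Anc T j f := by
  simp [Anc]

lemma abs_split (c z : ℂ) (hz : ‖z‖ = 1) :
    ‖c * ((1 + z) / 2)‖ ^ 2 + ‖c * ((1 - z) / 2)‖ ^ 2
      = ‖c‖ ^ 2 := by
  have h1 : ‖1 + z‖ ^ 2 + ‖1 - z‖ ^ 2 = 4 := by
    rw [Complex.sq_norm, Complex.sq_norm, Complex.normSq_add, Complex.normSq_sub]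
    have : Complex.normSq z = 1 := by rw [Complex.normSq_eq_norm_sq, hz]; norm_num
    simp [this]
    ring
  simp only [norm_mul, norm_div, Complex.norm_two]
  rw [mul_pow, mul_pow, div_pow, div_pow, ← mul_add, ← add_div, h1]
  norm_num

/-- single right child: filter unchanged -/
lemma filt_right_only {T : Set (ℕ × ℕ)} {j f : ℕ} (hf : f < 2 ^ j)
    (hno : (j + 1, f + 2 ^ j) ∉ T) (ξ : ℕ) : filt T (j + 1) f ξ = filt T j f ξ := by
  unfold filt
  rw [Anc_succ, Nat.mod_eq_of_lt hf, if_neg (by tauto)]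

/-- single left child: filter unchanged -/
lemma filt_left_only {T : Set (ℕ × ℕ)} {j f : ℕ} (hf : f < 2 ^ j)
    (hno : (j + 1, f) ∉ T) (ξ : ℕ) : filt T (j + 1) (f + 2 ^ j) ξ = filt T j f ξ := by
  have hmod : ∀ ℓ < j, (f + 2 ^ j) % 2 ^ ℓ = f % 2 ^ ℓ := fun ℓ hℓ => mod_add_pow f j ℓ hℓ.le
  have hA : Anc T (j + 1) (f + 2 ^ j) = Anc T j f := by
    rw [Anc_succ, mod_add_pow f j j le_rfl, Nat.mod_eq_of_lt hf, if_neg (by tauto)]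
    exact Anc_congr T hmod
  unfold filt
  rw [hA]
  congr 1
  apply Finset.prod_congr rfl
  intro ℓ hℓ
  have hℓj : ℓ < j := by
    have := (Finset.mem_filter.mp hℓ).1; rwa [Finset.mem_range] at this
  rw [exp_shift ξ f j ℓ hℓj]

/-- two children, right -/
lemma filt_both_right {T : Set (ℕ × ℕ)} {j f : ℕ} (hf : f < 2 ^ j)
    (h1 : (j + 1, f) ∈ T) (h2 : (j + 1, f + 2 ^ j) ∈ T) (ξ : ℕ) :
    filt T (j + 1) f ξ = filt T j f ξ *
      ((1 + Complex.exp (2 * (Real.pi : ℂ) * Complex.I * ((ξ : ℂ) - (f : ℂ)) / 2 ^ (j + 1))) / 2) := by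
  unfold filt
  rw [Anc_succ, Nat.mod_eq_of_lt hf, if_pos ⟨h1, h2⟩,
    Finset.card_insert_of_notMem (not_mem_Anc T j f),
    Finset.prod_insert (not_mem_Anc T j f)]
  rw [show (-(((Anc T j f).card + 1 : ℕ) : ℤ)) = -((Anc T j f).card : ℤ) + (-1) by push_cast; ring,
    zpow_add₀ (two_ne_zero)]
  simp [zpow_neg]
  ring

/-- two children, left -/
lemma filt_both_left {T : Set (ℕ × ℕ)} {j f : ℕ} (hf : f < 2 ^ j)
    (h1 : (j + 1, f) ∈ T) (h2 : (j + 1, f + 2 ^ j) ∈ T) (ξ : ℕ) :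
    filt T (j + 1) (f + 2 ^ j) ξ = filt T j f ξ *
      ((1 - Complex.exp (2 * (Real.pi : ℂ) * Complex.I * ((ξ : ℂ) - (f : ℂ)) / 2 ^ (j + 1))) / 2) := by
  have hmod : ∀ ℓ < j, (f + 2 ^ j) % 2 ^ ℓ = f % 2 ^ ℓ := fun ℓ hℓ => mod_add_pow f j ℓ hℓ.le
  unfold filt
  rw [Anc_succ, mod_add_pow f j j le_rfl, Nat.mod_eq_of_lt hf, if_pos ⟨h1, h2⟩,
    Anc_congr T hmod,
    Finset.card_insert_of_notMem (not_mem_Anc T j f),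
    Finset.prod_insert (not_mem_Anc T j f)]
  rw [neg_z ξ f j]
  have hprod : ∀ ℓ ∈ Anc T j f,
      (1 + Complex.exp (2 * (Real.pi : ℂ) * Complex.I * ((ξ : ℂ) - ((f + 2 ^ j : ℕ) : ℂ)) / 2 ^ (ℓ + 1)))
      = (1 + Complex.exp (2 * (Real.pi : ℂ) * Complex.I * ((ξ : ℂ) - (f : ℂ)) / 2 ^ (ℓ + 1))) := by
    intro ℓ hℓ
    have hℓj : ℓ < j := by
      have := (Finset.mem_filter.mp hℓ).1; rwa [Finset.mem_range] at this
    rw [exp_shift ξ f j ℓ hℓj]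
  rw [Finset.prod_congr rfl hprod]
  rw [show (-(((Anc T j f).card + 1 : ℕ) : ℤ)) = -((Anc T j f).card : ℤ) + (-1) by push_cast; ring,
    zpow_add₀ (two_ne_zero)]
  simp [zpow_neg]
  ring

lemma anc_at {m : ℕ} {T : Set (ℕ × ℕ)} (hT : IsSubtree m T) {j' f' k : ℕ}
    (h : (j', f') ∈ T) (hk : k ≤ j') : (k, f' % 2 ^ k) ∈ T := by
  have : (k + (j' - k), f') ∈ T := by rwa [Nat.add_sub_cancel' hk]
  exact ancestor_mem hT (j' - k) k f' this

lemma residue_cases {x j f : ℕ} (hx : x < 2 ^ (j + 1)) (h : x % 2 ^ j = f) :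
    x = f ∨ x = f + 2 ^ j := by
  have h1 := Nat.div_add_mod x (2 ^ j)
  have h2 : x / 2 ^ j < 2 := by
    apply Nat.div_lt_of_lt_mul
    rwa [show 2 ^ j * 2 = 2 ^ (j + 1) by rw [pow_succ]]
  interval_cases hq : x / 2 ^ j <;> omega

lemma step_cases {m : ℕ} {T : Set (ℕ × ℕ)} (hT : IsSubtree m T) {j f : ℕ}
    {p : ℕ × ℕ} (hpT : (p.1, p.2) ∈ T) (h1 : j ≤ p.1) (h2 : p.2 % 2 ^ j = f) :
    (p.1 = j ∧ p.2 = f) ∨ (j + 1 ≤ p.1 ∧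
      (((j + 1, f) ∈ T ∧ p.2 % 2 ^ (j + 1) = f) ∨
       ((j + 1, f + 2 ^ j) ∈ T ∧ p.2 % 2 ^ (j + 1) = f + 2 ^ j))) := by
  rcases eq_or_lt_of_le h1 with heq | hlt
  · left
    have hb : p.2 < 2 ^ j := by rw [heq]; exact (hT.2.2 p.1 p.2 hpT).2
    rw [Nat.mod_eq_of_lt hb] at h2
    exact ⟨heq.symm, h2⟩
  · right
    refine ⟨hlt, ?_⟩
    have hanc : (j + 1, p.2 % 2 ^ (j + 1)) ∈ T := anc_at hT hpT hlt
    have hxlt : p.2 % 2 ^ (j + 1) < 2 ^ (j + 1) := Nat.mod_lt _ (by positivity)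
    have hxm : p.2 % 2 ^ (j + 1) % 2 ^ j = f := by
      rw [Nat.mod_mod_of_dvd _ (pow_dvd_pow 2 (Nat.le_succ j))]; exact h2
    rcases residue_cases hxlt hxm with hc | hc
    · left; rw [hc] at hanc; exact ⟨hanc, hc⟩
    · right; rw [hc] at hanc; exact ⟨hanc, hc⟩


lemma leaf_filter {m : ℕ} {T : Set (ℕ × ℕ)} (hT : IsSubtree m T)
    (L : Finset (ℕ × ℕ)) (hL : ∀ p : ℕ × ℕ, p ∈ L ↔ IsLeaf T p.1 p.2) {j f : ℕ}
    (hmem : (j, f) ∈ T) (hR : (j + 1, f) ∉ T) (hLc : (j + 1, f + 2 ^ j) ∉ T) :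
    L.filter (fun p => j ≤ p.1 ∧ p.2 % 2 ^ j = f) = {(j, f)} := by
  have hf : f < 2 ^ j := (hT.2.2 j f hmem).2
  ext p
  simp only [Finset.mem_filter, Finset.mem_singleton]
  constructor
  · rintro ⟨hp, h1, h2⟩
    have hpT : (p.1, p.2) ∈ T := ((hL p).mp hp).1
    rcases step_cases hT hpT h1 h2 with ⟨he1, he2⟩ | ⟨_, ⟨hc, _⟩ | ⟨hc, _⟩⟩
    · exact Prod.ext he1 he2
    · exact absurd hc hR
    · exact absurd hc hLc
  · rintro rfl
    exact ⟨(hL (j, f)).mpr ⟨hmem, hR, hLc⟩, le_rfl, Nat.mod_eq_of_lt hf⟩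

lemma main_ind {m : ℕ} {T : Set (ℕ × ℕ)} (hT : IsSubtree m T)
    (L : Finset (ℕ × ℕ)) (hL : ∀ p : ℕ × ℕ, p ∈ L ↔ IsLeaf T p.1 p.2) (ξ : ℕ) :
    ∀ d j f, m ≤ j + d → (j, f) ∈ T →
      ∑ p ∈ L.filter (fun p => j ≤ p.1 ∧ p.2 % 2 ^ j = f),
          ‖filt T p.1 p.2 ξ‖ ^ 2 = ‖filt T j f ξ‖ ^ 2 := by
  intro d
  induction d with
  | zero =>
    intro j f hjd hmem
    have hR : (j + 1, f) ∉ T := fun h => by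
      have h1 := (hT.2.2 _ _ h).1
      have h2 := (hT.2.2 j f hmem).1
      omega
    have hLc : (j + 1, f + 2 ^ j) ∉ T := fun h => by
      have h1 := (hT.2.2 _ _ h).1
      have h2 := (hT.2.2 j f hmem).1
      omega
    rw [leaf_filter hT L hL hmem hR hLc]
    simp
  | succ d ih =>
    intro j f hjd hmem
    have hf : f < 2 ^ j := (hT.2.2 j f hmem).2
    have hjd' : m ≤ (j + 1) + d := by omega
    have hback : ∀ c, c % 2 ^ j = f → ∀ p : ℕ × ℕ, j + 1 ≤ p.1 → p.2 % 2 ^ (j + 1) = c →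
        j ≤ p.1 ∧ p.2 % 2 ^ j = f := by
      intro c hc p h1 h2
      refine ⟨by omega, ?_⟩
      rw [← Nat.mod_mod_of_dvd p.2 (pow_dvd_pow 2 (Nat.le_succ j)), h2, hc]
    have hmf : f % 2 ^ j = f := Nat.mod_eq_of_lt hf
    have hmf2 : (f + 2 ^ j) % 2 ^ j = f := by rw [mod_add_pow f j j le_rfl, hmf]
    by_cases hR : (j + 1, f) ∈ T <;> by_cases hLc : (j + 1, f + 2 ^ j) ∈ T
    · -- both children
      have hnotleaf : (j, f) ∉ L := fun h => ((hL (j, f)).mp h).2.1 hR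
      have hsplit : L.filter (fun p => j ≤ p.1 ∧ p.2 % 2 ^ j = f) =
          L.filter (fun p => j + 1 ≤ p.1 ∧ p.2 % 2 ^ (j + 1) = f) ∪
          L.filter (fun p => j + 1 ≤ p.1 ∧ p.2 % 2 ^ (j + 1) = f + 2 ^ j) := by
        ext p
        simp only [Finset.mem_filter, Finset.mem_union]
        constructor
        · rintro ⟨hp, h1, h2⟩
          have hpT : (p.1, p.2) ∈ T := ((hL p).mp hp).1
          rcases step_cases hT hpT h1 h2 with ⟨he1, he2⟩ | ⟨hle, ⟨_, hc⟩ | ⟨_, hc⟩⟩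
          · exfalso
            have : p = (j, f) := Prod.ext he1 he2
            rw [this] at hp
            exact hnotleaf hp
          · exact Or.inl ⟨hp, hle, hc⟩
          · exact Or.inr ⟨hp, hle, hc⟩
        · rintro (⟨hp, h1, h2⟩ | ⟨hp, h1, h2⟩)
          · exact ⟨hp, hback f hmf p h1 h2⟩
          · exact ⟨hp, hback (f + 2 ^ j) hmf2 p h1 h2⟩
      have hdisj : Disjoint
          (L.filter (fun p => j + 1 ≤ p.1 ∧ p.2 % 2 ^ (j + 1) = f))
          (L.filter (fun p => j + 1 ≤ p.1 ∧ p.2 % 2 ^ (j + 1) = f + 2 ^ j)) := by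
        rw [Finset.disjoint_left]
        intro p h1 h2
        have e1 := (Finset.mem_filter.mp h1).2.2
        have e2 := (Finset.mem_filter.mp h2).2.2
        have : (0:ℕ) < 2 ^ j := Nat.pow_pos (by norm_num)
        omega
      rw [hsplit, Finset.sum_union hdisj, ih (j + 1) f hjd' hR,
        ih (j + 1) (f + 2 ^ j) hjd' hLc, filt_both_right hf hR hLc ξ,
        filt_both_left hf hR hLc ξ, abs_split _ _ (abs_z ξ f j)]
    · -- right child only
      have hsingle : L.filter (fun p => j ≤ p.1 ∧ p.2 % 2 ^ j = f) =
          L.filter (fun p => j + 1 ≤ p.1 ∧ p.2 % 2 ^ (j + 1) = f) := by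
        ext p
        simp only [Finset.mem_filter]
        constructor
        · rintro ⟨hp, h1, h2⟩
          have hpT : (p.1, p.2) ∈ T := ((hL p).mp hp).1
          rcases step_cases hT hpT h1 h2 with ⟨he1, he2⟩ | ⟨hle, ⟨_, hc⟩ | ⟨hc, _⟩⟩
          · exfalso
            have : p = (j, f) := Prod.ext he1 he2
            rw [this] at hp
            exact ((hL (j, f)).mp hp).2.1 hR
          · exact ⟨hp, hle, hc⟩
          · exact absurd hc hLc
        · rintro ⟨hp, h1, h2⟩
          exact ⟨hp, hback f hmf p h1 h2⟩
      rw [hsingle, ih (j + 1) f hjd' hR, filt_right_only hf hLc ξ]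
    · -- left child only
      have hsingle : L.filter (fun p => j ≤ p.1 ∧ p.2 % 2 ^ j = f) =
          L.filter (fun p => j + 1 ≤ p.1 ∧ p.2 % 2 ^ (j + 1) = f + 2 ^ j) := by
        ext p
        simp only [Finset.mem_filter]
        constructor
        · rintro ⟨hp, h1, h2⟩
          have hpT : (p.1, p.2) ∈ T := ((hL p).mp hp).1
          rcases step_cases hT hpT h1 h2 with ⟨he1, he2⟩ | ⟨hle, ⟨hc, _⟩ | ⟨_, hc⟩⟩
          · exfalso
            have : p = (j, f) := Prod.ext he1 he2
            rw [this] at hp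
            exact ((hL (j, f)).mp hp).2.2 hLc
          · exact absurd hc hR
          · exact ⟨hp, hle, hc⟩
        · rintro ⟨hp, h1, h2⟩
          exact ⟨hp, hback (f + 2 ^ j) hmf2 p h1 h2⟩
      rw [hsingle, ih (j + 1) (f + 2 ^ j) hjd' hLc, filt_left_only hf hR ξ]
    · -- leaf
      rw [leaf_filter hT L hL hmem hR hLc]
      simp


/-- Unit partition of energy in one dimension: for `n = 2^m` a power of two, any subtree `T`
of `T^full_n` with set of leaves `L`, and every `ξ ∈ [n]`,
`∑_{v ∈ Leaves(T)} |Ĝ_v(ξ)|² = 1`. -/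
theorem stmt_7 (m : ℕ) (T : Set (ℕ × ℕ)) (hT : IsSubtree m T)
    (L : Finset (ℕ × ℕ)) (hL : ∀ p : ℕ × ℕ, p ∈ L ↔ IsLeaf T p.1 p.2)
    (ξ : ℕ) (hξ : ξ < 2 ^ m) :
    ∑ p ∈ L, ‖filt T p.1 p.2 ξ‖ ^ 2 = 1 := by
  have h := main_ind hT L hL ξ m 0 0 (by omega) hT.1
  have hfilt : L.filter (fun p => 0 ≤ p.1 ∧ p.2 % 2 ^ 0 = 0) = L := by
    apply Finset.filter_true_of_mem
    intro p _
    simp [Nat.mod_one]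
  rw [hfilt] at h
  rw [h]
  have : filt T 0 0 ξ = 1 := by
    simp [filt, Anc]
  rw [this]
  simp
end
end

section
/- In the Orthogonal-Vectors-to-Fourier reduction, with t_j = Σ_{r∈[d]} a_j(r)·M^{rq} and f_j = Σ_{r∈[d]} b_j(r)·N/M^{rq+1} where N = M^{2dq}, the Fourier coefficient of the indicator vector x of {t₀,…,t_{k−1}} at frequency f_j equals x̂_{f_j} = Σ_{ℓ∈[k]} exp(−2πi·(⟨a_ℓ, b_j⟩/M + ξ_{ℓ,j})) for real error terms ξ_{ℓ,j} with |ξ_{ℓ,j}| ≤ C(d,2)·M^{−q−1}, where C(d,2) = d(d−1)/2. -/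
noncomputable section

/-- In the OV-to-Fourier reduction, the frequency built from `b ∈ {0,1}^d` is
`f = ∑_{r ∈ [d]} b(r) ⬝ N / M^{rq+1}` where `N = M^{2dq}`. -/
def freqC (d M q : ℕ) (b : Fin d → ℕ) : ℂ :=
  ∑ r : Fin d, (b r : ℂ) * (M : ℂ) ^ (2 * d * q) / (M : ℂ) ^ ((r : ℕ) * q + 1)

/-- In the OV-to-Fourier reduction, the time point built from `a ∈ {0,1}^d` is
`t = ∑_{r ∈ [d]} a(r) ⬝ M^{rq}`. -/
def timeC (d M q : ℕ) (a : Fin d → ℕ) : ℂ :=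
  ∑ r : Fin d, (a r : ℂ) * (M : ℂ) ^ ((r : ℕ) * q)

/-- In the Orthogonal-Vectors-to-Fourier reduction, with `t_ℓ = ∑_r a_ℓ(r) M^{rq}` and
`f = ∑_r b(r) N / M^{rq+1}` where `N = M^{2dq}`, the Fourier coefficient of the indicator
vector of `{t₀, …, t_{k−1}}` at frequency `f`, namely `∑_ℓ e^{−2πi f t_ℓ / N}`, equals
`∑_ℓ exp(−2πi (⟨a_ℓ, b⟩ / M + ξ_ℓ))` for real error terms `ξ_ℓ` with
`|ξ_ℓ| ≤ C(d,2) ⬝ M^{−q−1}`, where `C(d,2) = d(d−1)/2`. -/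
theorem stmt_13 (k d M q : ℕ) (hM : 2 ≤ M) (hq : 1 ≤ q)
    (a : Fin k → Fin d → ℕ) (b : Fin d → ℕ)
    (ha : ∀ ℓ r, a ℓ r ≤ 1) (hb : ∀ r, b r ≤ 1) :
    ∃ ξ : Fin k → ℝ,
      (∀ ℓ, |ξ ℓ| ≤ (d : ℝ) * ((d : ℝ) - 1) / 2 * ((M : ℝ) ^ (q + 1))⁻¹) ∧
        ∑ ℓ, Complex.exp (-(2 * (Real.pi : ℂ) * Complex.I) *
            (freqC d M q b * timeC d M q (a ℓ) / (M : ℂ) ^ (2 * d * q)))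
          = ∑ ℓ, Complex.exp (-(2 * (Real.pi : ℂ) * Complex.I) *
              (((∑ r, a ℓ r * b r : ℕ) : ℂ) / (M : ℂ) + (ξ ℓ : ℂ))) := by
  have hM0 : (M : ℂ) ≠ 0 := Nat.cast_ne_zero.mpr (by omega)
  have hM1 : (1 : ℝ) ≤ (M : ℝ) := by exact_mod_cast (by omega : 1 ≤ M)
  -- the error terms
  refine ⟨fun ℓ => ∑ r : Fin d, ∑ r' : Fin d,
      if (r' : ℕ) < (r : ℕ) then
        (b r : ℝ) * (a ℓ r' : ℝ) * ((M : ℝ) ^ ((r' : ℕ) * q) / (M : ℝ) ^ ((r : ℕ) * q + 1))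
      else 0, ?_, ?_⟩
  · intro ℓ
    beta_reduce
    have hterm : ∀ r r' : Fin d, (r' : ℕ) < (r : ℕ) →
        (b r : ℝ) * (a ℓ r' : ℝ) * ((M : ℝ) ^ ((r' : ℕ) * q) / (M : ℝ) ^ ((r : ℕ) * q + 1))
          ≤ ((M : ℝ) ^ (q + 1))⁻¹ := by
      intro r r' h
      have hab : (b r : ℝ) * (a ℓ r' : ℝ) ≤ 1 := by
        have h1 : (b r : ℝ) ≤ 1 := by exact_mod_cast hb r
        have h2 : (a ℓ r' : ℝ) ≤ 1 := by exact_mod_cast ha ℓ r'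
        nlinarith [Nat.cast_nonneg (α := ℝ) (b r), Nat.cast_nonneg (α := ℝ) (a ℓ r')]
      have hdiv : (M : ℝ) ^ ((r' : ℕ) * q) / (M : ℝ) ^ ((r : ℕ) * q + 1)
          ≤ ((M : ℝ) ^ (q + 1))⁻¹ := by
        rw [div_le_iff₀ (by positivity), inv_mul_eq_div, le_div_iff₀ (by positivity),
          ← pow_add]
        apply pow_le_pow_right₀ hM1
        have := Nat.mul_le_mul_right q (by omega : r' + 1 ≤ (r : ℕ))
        nlinarith
      calc (b r : ℝ) * (a ℓ r' : ℝ) * ((M : ℝ) ^ ((r' : ℕ) * q) / (M : ℝ) ^ ((r : ℕ) * q + 1))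
          ≤ 1 * ((M : ℝ) ^ (q + 1))⁻¹ := by
            apply mul_le_mul hab hdiv (by positivity) zero_le_one
        _ = ((M : ℝ) ^ (q + 1))⁻¹ := one_mul _
    have hnn : (0 : ℝ) ≤ ∑ r : Fin d, ∑ r' : Fin d,
        if (r' : ℕ) < (r : ℕ) then
          (b r : ℝ) * (a ℓ r' : ℝ) * ((M : ℝ) ^ ((r' : ℕ) * q) / (M : ℝ) ^ ((r : ℕ) * q + 1))
        else 0 := by
      refine Finset.sum_nonneg fun r _ => Finset.sum_nonneg fun r' _ => ?_
      split
      · positivity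
      · exact le_rfl
    rw [abs_of_nonneg hnn]
    have step1 : (∑ r : Fin d, ∑ r' : Fin d,
        if (r' : ℕ) < (r : ℕ) then
          (b r : ℝ) * (a ℓ r' : ℝ) * ((M : ℝ) ^ ((r' : ℕ) * q) / (M : ℝ) ^ ((r : ℕ) * q + 1))
        else 0)
        ≤ ∑ r : Fin d, ∑ r' : Fin d,
          (if (r' : ℕ) < (r : ℕ) then ((M : ℝ) ^ (q + 1))⁻¹ else 0) := by
      refine Finset.sum_le_sum fun r _ => Finset.sum_le_sum fun r' _ => ?_
      split
      · exact hterm r r' (by assumption)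
      · exact le_rfl
    refine step1.trans (le_of_eq ?_)
    have hcard : ∀ r : Fin d,
        (∑ r' : Fin d, (if (r' : ℕ) < (r : ℕ) then ((M : ℝ) ^ (q + 1))⁻¹ else 0))
          = ((r : ℕ) : ℝ) * ((M : ℝ) ^ (q + 1))⁻¹ := by
      intro r
      rw [← Finset.sum_filter]
      rw [Finset.sum_const]
      have : (Finset.univ.filter fun r' : Fin d => (r' : ℕ) < (r : ℕ)) = Finset.Iio r := by
        ext x
        simp only [Finset.mem_filter, Finset.mem_univ, true_and, Finset.mem_Iio, Fin.lt_def]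
      rw [this, Fin.card_Iio, nsmul_eq_mul]
    rw [Finset.sum_congr rfl fun r _ => hcard r, ← Finset.sum_mul]
    congr 1
    have hsum : (∑ r : Fin d, ((r : ℕ) : ℝ)) = (d : ℝ) * ((d : ℝ) - 1) / 2 := by
      rcases d with _ | n
      · simp
      · have h2 : (∑ i ∈ Finset.range (n + 1), i) * 2 = (n + 1) * n :=
          Finset.sum_range_id_mul_two (n + 1)
        have : (∑ r : Fin (n + 1), ((r : ℕ) : ℝ)) = ((∑ i ∈ Finset.range (n + 1), i : ℕ) : ℝ) := by
          rw [Nat.cast_sum, Fin.sum_univ_eq_sum_range]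
        rw [this]
        have h3 : ((∑ i ∈ Finset.range (n + 1), i : ℕ) : ℝ) * 2 = ((n : ℝ) + 1) * n := by
          exact_mod_cast congrArg (Nat.cast : ℕ → ℝ) h2
        push_cast at h3 ⊢
        linarith
    rw [hsum]
  · refine Finset.sum_congr rfl fun ℓ _ => ?_
    -- abbreviation for the generic term
    set t : Fin d → Fin d → ℂ := fun r r' =>
      (b r : ℂ) * (a ℓ r' : ℂ) * ((M : ℂ) ^ ((r' : ℕ) * q) / (M : ℂ) ^ ((r : ℕ) * q + 1))
      with ht
    have expand : freqC d M q b * timeC d M q (a ℓ) / (M : ℂ) ^ (2 * d * q)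
        = ∑ r : Fin d, ∑ r' : Fin d, t r r' := by
      rw [freqC, timeC, Finset.sum_mul_sum, Finset.sum_div]
      refine Finset.sum_congr rfl fun r _ => ?_
      rw [Finset.sum_div]
      refine Finset.sum_congr rfl fun r' _ => ?_
      rw [ht]
      have h1 : ((M : ℂ) ^ ((r : ℕ) * q + 1)) ≠ 0 := pow_ne_zero _ hM0
      have h2 : ((M : ℂ) ^ (2 * d * q)) ≠ 0 := pow_ne_zero _ hM0
      field_simp
    -- the integer part
    set U : ℕ := ∑ r : Fin d, ∑ r' : Fin d,
      if (r : ℕ) < (r' : ℕ) then b r * a ℓ r' * M ^ ((r' : ℕ) * q - ((r : ℕ) * q + 1)) else 0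
      with hU
    have split : (∑ r : Fin d, ∑ r' : Fin d, t r r')
        = ((∑ r, a ℓ r * b r : ℕ) : ℂ) / (M : ℂ)
          + ((∑ r : Fin d, ∑ r' : Fin d,
              if (r' : ℕ) < (r : ℕ) then
                (b r : ℝ) * (a ℓ r' : ℝ)
                  * ((M : ℝ) ^ ((r' : ℕ) * q) / (M : ℝ) ^ ((r : ℕ) * q + 1))
              else 0 : ℝ) : ℂ)
          + (U : ℂ) := by
      have tri : ∀ r r' : Fin d, t r r'
          = (if (r' : ℕ) < (r : ℕ) then t r r' else 0)
            + (if (r' : ℕ) = (r : ℕ) then t r r' else 0)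
            + (if (r : ℕ) < (r' : ℕ) then t r r' else 0) := by
        intro r r'
        rcases lt_trichotomy ((r' : ℕ)) ((r : ℕ)) with h | h | h
        · rw [if_pos h, if_neg (by omega), if_neg (by omega)]; ring
        · rw [if_neg (by omega), if_pos h, if_neg (by omega)]; ring
        · rw [if_neg (by omega), if_neg (by omega), if_pos h]; ring
      rw [Finset.sum_congr rfl fun r _ => Finset.sum_congr rfl fun r' _ => tri r r']
      simp only [Finset.sum_add_distrib]
      have hdiag : (∑ r : Fin d, ∑ r' : Fin d, (if (r' : ℕ) = (r : ℕ) then t r r' else 0))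
          = ((∑ r, a ℓ r * b r : ℕ) : ℂ) / (M : ℂ) := by
        have : ∀ r : Fin d, (∑ r' : Fin d, (if (r' : ℕ) = (r : ℕ) then t r r' else 0))
            = t r r := by
          intro r
          rw [show (fun r' : Fin d => if (r' : ℕ) = (r : ℕ) then t r r' else 0)
              = fun r' : Fin d => if r' = r then t r r' else 0 by
            funext r'; congr 1; simp [Fin.ext_iff]]
          simp [Finset.sum_ite_eq']
        rw [Finset.sum_congr rfl fun r _ => this r]
        rw [Nat.cast_sum, Finset.sum_div]
        refine Finset.sum_congr rfl fun r _ => ?_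
        rw [ht]
        have h1 : ((M : ℂ) ^ ((r : ℕ) * q)) ≠ 0 := pow_ne_zero _ hM0
        push_cast
        rw [pow_succ]
        field_simp
      have hlow : (∑ r : Fin d, ∑ r' : Fin d, (if (r' : ℕ) < (r : ℕ) then t r r' else 0))
          = ((∑ r : Fin d, ∑ r' : Fin d,
              if (r' : ℕ) < (r : ℕ) then
                (b r : ℝ) * (a ℓ r' : ℝ)
                  * ((M : ℝ) ^ ((r' : ℕ) * q) / (M : ℝ) ^ ((r : ℕ) * q + 1))
              else 0 : ℝ) : ℂ) := by
        rw [Complex.ofReal_sum]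
        refine Finset.sum_congr rfl fun r _ => ?_
        rw [Complex.ofReal_sum]
        refine Finset.sum_congr rfl fun r' _ => ?_
        split
        · rw [ht]; push_cast; ring
        · simp
      have hup : (∑ r : Fin d, ∑ r' : Fin d, (if (r : ℕ) < (r' : ℕ) then t r r' else 0))
          = (U : ℂ) := by
        rw [hU, Nat.cast_sum]
        refine Finset.sum_congr rfl fun r _ => ?_
        rw [Nat.cast_sum]
        refine Finset.sum_congr rfl fun r' _ => ?_
        rw [apply_ite (Nat.cast : ℕ → ℂ)]
        split
        · rename_i h
          rw [ht]
          have hle : (r : ℕ) * q + 1 ≤ (r' : ℕ) * q := by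
            have := Nat.mul_le_mul_right q (by omega : (r : ℕ) + 1 ≤ (r' : ℕ))
            nlinarith
          push_cast
          rw [pow_sub₀ _ hM0 hle]
          ring
        · simp
      rw [hdiag, hlow, hup]
      ring
    rw [expand, split]
    rw [show -(2 * (Real.pi : ℂ) * Complex.I) *
        (((∑ r, a ℓ r * b r : ℕ) : ℂ) / (M : ℂ)
          + ((∑ r : Fin d, ∑ r' : Fin d,
              if (r' : ℕ) < (r : ℕ) then
                (b r : ℝ) * (a ℓ r' : ℝ)
                  * ((M : ℝ) ^ ((r' : ℕ) * q) / (M : ℝ) ^ ((r : ℕ) * q + 1))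
              else 0 : ℝ) : ℂ)
          + (U : ℂ))
        = -(2 * (Real.pi : ℂ) * Complex.I) *
            (((∑ r, a ℓ r * b r : ℕ) : ℂ) / (M : ℂ)
              + ((∑ r : Fin d, ∑ r' : Fin d,
                  if (r' : ℕ) < (r : ℕ) then
                    (b r : ℝ) * (a ℓ r' : ℝ)
                      * ((M : ℝ) ^ ((r' : ℕ) * q) / (M : ℝ) ^ ((r : ℕ) * q + 1))
                  else 0 : ℝ) : ℂ))
          + ((-(U : ℤ) : ℤ) : ℂ) * (2 * (Real.pi : ℂ) * Complex.I) by push_cast; ring]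
    rw [Complex.exp_add, Complex.exp_int_mul_two_pi_mul_I, mul_one]
end
end

section
/- Pairing cancellation at the lowest common ancestor: let n be a power of two, let f, f' ∈ [n] with f' − f ≡ 2^L (mod 2^{L+1}) for some level L, and let A be a finite set of levels with L ∈ A. Then Σ_{S ⊆ A} e^{2πi(f'−f)·Σ_{ℓ∈S} 2^{-(ℓ+1)}} = 0. -/
/-- Pairing cancellation at the lowest common ancestor: let `f, f'` be integers with
`f' − f ≡ 2^L (mod 2^{L+1})` for some level `L`, and let `A` be a finite set of levels
with `L ∈ A`.  Then `∑_{S ⊆ A} e^{2πi (f'−f) ∑_{ℓ ∈ S} 2^{−(ℓ+1)}} = 0`. -/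
theorem stmt_18 (f f' : ℤ) (L : ℕ) (hmod : f' - f ≡ 2 ^ L [ZMOD 2 ^ (L + 1)])
    (A : Finset ℕ) (hL : L ∈ A) :
    ∑ S ∈ A.powerset,
        Complex.exp (2 * (Real.pi : ℂ) * Complex.I * ((f' : ℂ) - (f : ℂ)) *
          ((∑ ℓ ∈ S, ((2 : ℝ) ^ (ℓ + 1))⁻¹ : ℝ) : ℂ)) = 0 := by
  -- Extract k with f' - f = 2^L + 2^(L+1) * k
  obtain ⟨k, hk⟩ := (Int.ModEq.dvd hmod.symm)
  have hk' : f' - f = 2 ^ L + 2 ^ (L + 1) * k := by linarith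
  -- key: exp(2πi d / 2^(L+1)) = -1
  have key : Complex.exp (2 * (Real.pi : ℂ) * Complex.I * ((f' : ℂ) - (f : ℂ)) *
      ((2 : ℂ) ^ (L + 1))⁻¹) = -1 := by
    have hd : ((f' : ℂ) - (f : ℂ)) = 2 ^ L + 2 ^ (L + 1) * (k : ℂ) := by
      exact_mod_cast congrArg (fun z : ℤ => (z : ℂ)) hk'
    have h2 : ((2 : ℂ) ^ (L + 1)) ≠ 0 := pow_ne_zero _ two_ne_zero
    have harg : 2 * (Real.pi : ℂ) * Complex.I * ((f' : ℂ) - (f : ℂ)) *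
        ((2 : ℂ) ^ (L + 1))⁻¹ = Real.pi * Complex.I + (k : ℂ) * (2 * Real.pi * Complex.I) := by
      rw [hd]
      field_simp
      ring
    rw [harg, Complex.exp_add, Complex.exp_int_mul_two_pi_mul_I, mul_one, Complex.exp_pi_mul_I]
  -- split powerset
  have hA : A = insert L (A.erase L) := (Finset.insert_erase hL).symm
  rw [hA, Finset.powerset_insert, Finset.sum_union]
  · rw [Finset.sum_image (fun x hx y hy h => by
      have hxL : L ∉ x := fun hc => (Finset.mem_erase.mp ((Finset.mem_powerset.mp hx) hc)).1 rfl
      have hyL : L ∉ y := fun hc => (Finset.mem_erase.mp ((Finset.mem_powerset.mp hy) hc)).1 rfl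
      exact (Finset.insert_erase_invOn.2.injOn (by simpa using hxL) (by simpa using hyL)) h)]
    rw [← Finset.sum_add_distrib]
    apply Finset.sum_eq_zero
    intro S hS
    have hLS : L ∉ S := fun hc => (Finset.mem_erase.mp ((Finset.mem_powerset.mp hS) hc)).1 rfl
    have hsum : (∑ ℓ ∈ insert L S, ((2 : ℝ) ^ (ℓ + 1))⁻¹)
        = ((2 : ℝ) ^ (L + 1))⁻¹ + ∑ ℓ ∈ S, ((2 : ℝ) ^ (ℓ + 1))⁻¹ := Finset.sum_insert hLS
    rw [hsum]
    push_cast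
    rw [mul_add, Complex.exp_add, key]
    ring
  · rw [Finset.disjoint_left]
    rintro S hS hS2
    obtain ⟨T, hT, rfl⟩ := Finset.mem_image.mp hS2
    have hTL : L ∉ T := fun hc => (Finset.mem_erase.mp ((Finset.mem_powerset.mp hT) hc)).1 rfl
    have : L ∈ A.erase L := Finset.mem_powerset.mp hS (Finset.mem_insert_self L T)
    exact (Finset.mem_erase.mp this).1 rfl
end
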